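/- Sharpness of the ACE bounds: Suppose the observed conditional laws p_z(x, y) = P(X = x, Y = y | Z = z), z ∈ {1,…,K}, arise from some model satisfying assumption (i) with instrument law π (π(z) > 0 for all z). Then there exist models on some probability space — random variables Z, X(z_1),…,X(z_K), Y(x_0), Y(x_1) satisfying assumption (i), with Z having law π and P(X = x, Y = y | Z = z) = p_z(x, y) for all x, y, z — in which ACE(X → Y) = g(0, 0) + g(1, 1) − 1, and (another such model) in which ACE(X → Y) = 1 − g(1, 0) − g(0, 1). -/

import Mathlib

open MeasureTheory ProbabilityTheory

/-- The bound `g(i, j)` of Theorem 2, expressed in terms of conditional laws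
`p z x y` (interpreted as `P(X = x, Y = y | Z = z)`):
`g(i,j) = min{ min_z [ p_z(X=i,Y=j) + p_z(X=1−i) ],`
`min_{z ≠ z̃} [ p_z(X=i,Y=j) + p_z(X=1−i,Y=0) + p_{z̃}(X=i,Y=j) + p_{z̃}(X=1−i,Y=1) ] }`,
where `p_z(X = 1−i) = p_z(X=1−i, Y=0) + p_z(X=1−i, Y=1)`. -/
noncomputable def gOf {K : ℕ} (hK : 2 ≤ K) (p : Fin K → Fin 2 → Fin 2 → ℝ)
    (i j : Fin 2) : ℝ :=
  min
    ((Finset.univ : Finset (Fin K)).inf'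
      ⟨⟨0, by omega⟩, Finset.mem_univ _⟩
      (fun z => p z i j + (p z (1 - i) 0 + p z (1 - i) 1)))
    (((Finset.univ : Finset (Fin K × Fin K)).filter (fun q => q.1 ≠ q.2)).inf'
      ⟨(⟨0, by omega⟩, ⟨1, by omega⟩), by
        simp only [Finset.mem_filter, Finset.mem_univ, true_and]
        exact fun h => absurd (congrArg Fin.val h) (by simp)⟩
      (fun q => p q.1 i j + p q.1 (1 - i) 0 + p q.2 i j + p q.2 (1 - i) 1))

/-- A binary instrumental-variable model with instrument law `π` and observed conditional
laws `p z x y = P(X = x, Y = y | Z = z)`, satisfying assumption (i): joint independence of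
`Z` from `(Y(x₀), Y(x₁), X(z₁), …, X(z_K))`.  The observed treatment is `X = X(Z)` and the
observed outcome is `Y = Y(X)`. -/
structure IVModel (K : ℕ) (π : Fin K → ℝ) (p : Fin K → Fin 2 → Fin 2 → ℝ) where
  (Ω : Type)
  [m : MeasurableSpace Ω]
  (P : Measure Ω)
  prob : IsProbabilityMeasure P
  Z : Ω → Fin K
  Xz : Fin K → Ω → Fin 2
  Y0 : Ω → Fin 2
  Y1 : Ω → Fin 2
  hZ : Measurable Z
  hXz : ∀ z, Measurable (Xz z)
  hY0 : Measurable Y0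
  hY1 : Measurable Y1
  indep : IndepFun Z (fun ω => (Y0 ω, Y1 ω, fun z => Xz z ω)) P
  law_Z : ∀ z, (P (Z ⁻¹' {z})).toReal = π z
  law_cond : ∀ (z : Fin K) (x y : Fin 2),
    (P[|Z ⁻¹' {z}] {ω | Xz (Z ω) ω = x ∧
      (if Xz (Z ω) ω = 0 then Y0 ω else Y1 ω) = y}).toReal = p z x y

noncomputable def mdisc {T : Type*} [Fintype T] [MeasurableSpace T] (u : T → ℝ) : Measure T :=
  ∑ a : T, ENNReal.ofReal (u a) • Measure.dirac a

lemma mdisc_apply {T : Type*} [Fintype T] [MeasurableSpace T] [MeasurableSingletonClass T]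
    (u : T → ℝ) (A : Set T) :
    mdisc u A = ∑ a : T, ENNReal.ofReal (u a) * A.indicator 1 a := by
  rw [mdisc]
  rw [show ((∑ a : T, ENNReal.ofReal (u a) • Measure.dirac a) A)
      = ∑ a : T, (ENNReal.ofReal (u a) • Measure.dirac a) A by
    rw [Measure.coe_finset_sum]; simp]
  congr 1; ext a
  rw [Measure.smul_apply, Measure.dirac_apply, smul_eq_mul]

lemma mdisc_singleton {T : Type*} [Fintype T] [MeasurableSpace T] [MeasurableSingletonClass T]
    (u : T → ℝ) (a : T) : mdisc u {a} = ENNReal.ofReal (u a) := by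
  rw [mdisc_apply]
  rw [Finset.sum_eq_single a]
  · simp
  · intro b _ hb; simp [Set.indicator_apply, hb]
  · simp

lemma mdisc_univ {T : Type*} [Fintype T] [MeasurableSpace T] [MeasurableSingletonClass T]
    (u : T → ℝ) (hu : ∀ a, 0 ≤ u a) :
    mdisc u Set.univ = ENNReal.ofReal (∑ a : T, u a) := by
  rw [mdisc_apply, ENNReal.ofReal_sum_of_nonneg (fun a _ => hu a)]
  simp

noncomputable def bern (r : ℝ) : Measure (Fin 2) := mdisc (fun v => if v = 0 then r else 1 - r)

lemma bern_prob {r : ℝ} (h0 : 0 ≤ r) (h1 : r ≤ 1) : IsProbabilityMeasure (bern r) := by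
  constructor
  rw [bern, mdisc_univ]
  · rw [Fin.sum_univ_two]; norm_num
  · intro a; fin_cases a <;> simp <;> linarith

lemma bern_zero (r : ℝ) : bern r {(0 : Fin 2)} = ENNReal.ofReal r := by
  rw [bern, mdisc_singleton]; simp

lemma bern_one (r : ℝ) : bern r {(1 : Fin 2)} = ENNReal.ofReal (1 - r) := by
  rw [bern, mdisc_singleton]; simp


lemma build {K : ℕ} (π : Fin K → ℝ) (p : Fin K → Fin 2 → Fin 2 → ℝ)
    (t : Fin 2 × Fin 2 → ℝ) (q : Fin K → Fin 2 × Fin 2 → ℝ)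
    (hπpos : ∀ z, 0 < π z) (hπ1 : ∑ z, π z = 1)
    (ht0 : ∀ c, 0 ≤ t c) (ht1 : ∑ c, t c = 1)
    (hq0 : ∀ z c, 0 ≤ q z c) (hq1 : ∀ z c, q z c ≤ 1)
    (e00 : ∀ z, t (0,0) * q z (0,0) + t (0,1) * q z (0,1) = p z 0 0)
    (e01 : ∀ z, t (1,0) * q z (1,0) + t (1,1) * q z (1,1) = p z 0 1)
    (e10 : ∀ z, t (0,0) * (1 - q z (0,0)) + t (1,0) * (1 - q z (1,0)) = p z 1 0)
    (e11 : ∀ z, t (0,1) * (1 - q z (0,1)) + t (1,1) * (1 - q z (1,1)) = p z 1 1) :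
    ∃ M : IVModel K π p,
      (M.P {ω | M.Y1 ω = 1}).toReal = t (0,1) + t (1,1) ∧
      (M.P {ω | M.Y0 ω = 1}).toReal = t (1,0) + t (1,1) := by
  classical
  -- the sample space
  set S : Type := (Fin K → Fin 2) × Fin 2 × Fin 2 with hS
  haveI : ∀ (z : Fin K) (c : Fin 2 × Fin 2), IsProbabilityMeasure (bern (q z c)) :=
    fun z c => bern_prob (hq0 z c) (hq1 z c)
  set pim : Fin 2 × Fin 2 → Measure (Fin K → Fin 2) :=
    fun c => Measure.pi (fun z => bern (q z c)) with hpim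
  haveI hpimP : ∀ c, IsProbabilityMeasure (pim c) := fun c => by
    rw [hpim]; infer_instance
  set μ1 : Measure (Fin K) := mdisc π with hμ1
  set μ2 : Measure S :=
    ∑ c : Fin 2 × Fin 2, ENNReal.ofReal (t c) • ((pim c).map (fun f => (f, c.1, c.2))) with hμ2
  -- applying μ2 to a set
  have hμ2E : ∀ E : Set S,
      μ2 E = ∑ c : Fin 2 × Fin 2,
        ENNReal.ofReal (t c) * (pim c) ((fun f => (f, c.1, c.2)) ⁻¹' E) := by
    intro E
    rw [hμ2]
    rw [show ((∑ c : Fin 2 × Fin 2, ENNReal.ofReal (t c) • ((pim c).map (fun f => (f, c.1, c.2)))) E)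
        = ∑ c : Fin 2 × Fin 2, (ENNReal.ofReal (t c) • ((pim c).map (fun f => (f, c.1, c.2)))) E by
      rw [Measure.coe_finset_sum]; simp]
    congr 1; ext c
    rw [Measure.smul_apply, Measure.map_apply Measurable.of_discrete MeasurableSet.of_discrete,
      smul_eq_mul]
  -- cylinder sets
  have hcyl : ∀ (c : Fin 2 × Fin 2) (z : Fin K) (x : Fin 2),
      (pim c) {f | f z = x} = bern (q z c) {x} := by
    intro c z x
    have : {f : Fin K → Fin 2 | f z = x}
        = Set.univ.pi (fun z' => if z' = z then ({x} : Set (Fin 2)) else Set.univ) := by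
      ext f
      simp only [Set.mem_setOf_eq, Set.mem_pi, Set.mem_univ, true_implies]
      constructor
      · intro h z'; by_cases hz : z' = z <;> simp [hz, h]
      · intro h; have := h z; simpa using this
    rw [this, hpim, Measure.pi_pi]
    rw [Finset.prod_eq_single z]
    · simp
    · intro z' _ hz'; simp [hz', measure_univ]
    · simp
  have hμ2univ : μ2 Set.univ = 1 := by
    rw [hμ2E]
    have : ∀ c : Fin 2 × Fin 2,
        ENNReal.ofReal (t c) * (pim c) ((fun f => (f, c.1, c.2)) ⁻¹' Set.univ)
        = ENNReal.ofReal (t c) := by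
      intro c; simp [measure_univ]
    rw [Finset.sum_congr rfl (fun c _ => this c)]
    rw [← ENNReal.ofReal_sum_of_nonneg (fun c _ => ht0 c), ht1, ENNReal.ofReal_one]
  haveI hμ2P : IsProbabilityMeasure μ2 := ⟨hμ2univ⟩
  haveI hμ1P : IsProbabilityMeasure μ1 := by
    constructor
    rw [hμ1, mdisc_univ π (fun z => (hπpos z).le), hπ1, ENNReal.ofReal_one]
  set P : Measure (Fin K × S) := μ1.prod μ2 with hP
  haveI hPP : IsProbabilityMeasure P := by rw [hP]; infer_instance
  -- independence of coordinates
  have hindep : IndepFun Prod.fst Prod.snd P := by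
    rw [indepFun_iff_measure_inter_preimage_eq_mul]
    intro s u hs hu
    have h1 : Prod.fst ⁻¹' s ∩ Prod.snd ⁻¹' u = s ×ˢ u := (Set.prod_eq s u).symm
    have h2 : (Prod.fst : Fin K × S → Fin K) ⁻¹' s = s ×ˢ (Set.univ : Set S) := by
      ext ω; simp
    have h3 : (Prod.snd : Fin K × S → S) ⁻¹' u = (Set.univ : Set (Fin K)) ×ˢ u := by
      ext ω; simp
    rw [h1, h2, h3, hP, Measure.prod_prod, Measure.prod_prod, Measure.prod_prod]
    simp [measure_univ]
  
  -- μ2 of section events matches p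
  have toReal2 : ∀ {a b c d : ℝ}, 0 ≤ a → 0 ≤ b → 0 ≤ c → 0 ≤ d →
      (ENNReal.ofReal a * ENNReal.ofReal b + ENNReal.ofReal c * ENNReal.ofReal d).toReal
        = a * b + c * d := by
    intro a b c d ha hb hc hd
    rw [← ENNReal.ofReal_mul ha, ← ENNReal.ofReal_mul hc,
      ← ENNReal.ofReal_add (by positivity) (by positivity),
      ENNReal.toReal_ofReal (by positivity)]
  have hq1' : ∀ z c, 0 ≤ 1 - q z c := fun z c => by linarith [hq1 z c]
  have hEz : ∀ (z : Fin K) (x y : Fin 2),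
      (μ2 {s : S | s.1 z = x ∧ (if x = 0 then s.2.1 else s.2.2) = y}).toReal = p z x y := by
    intro z x y
    rw [hμ2E]
    have hpre : ∀ c : Fin 2 × Fin 2,
        (fun f => (f, c.1, c.2)) ⁻¹' {s : S | s.1 z = x ∧ (if x = 0 then s.2.1 else s.2.2) = y}
        = if (if x = 0 then c.1 else c.2) = y then {f : Fin K → Fin 2 | f z = x} else ∅ := by
      intro c
      by_cases h : (if x = 0 then c.1 else c.2) = y
      · ext f; rw [if_pos h]
        show (f z = x ∧ (if x = 0 then c.1 else c.2) = y) ↔ f z = x; simp [h]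
      · ext f; rw [if_neg h]
        show (f z = x ∧ (if x = 0 then c.1 else c.2) = y) ↔ f ∈ (∅ : Set _); simp [h]
    rw [Finset.sum_congr rfl (fun c _ => by rw [hpre c])]
    have hterm : ∀ c : Fin 2 × Fin 2,
        ENNReal.ofReal (t c) *
          (pim c) (if (if x = 0 then c.1 else c.2) = y then {f : Fin K → Fin 2 | f z = x} else ∅)
        = if (if x = 0 then c.1 else c.2) = y
            then ENNReal.ofReal (t c) * bern (q z c) {x} else 0 := by
      intro c
      by_cases h : (if x = 0 then c.1 else c.2) = y
      · rw [if_pos h, if_pos h, hcyl]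
      · rw [if_neg h, if_neg h]; simp
    rw [Finset.sum_congr rfl (fun c _ => hterm c)]
    rw [Fintype.sum_prod_type]
    rw [Fin.sum_univ_two]
    rw [Fin.sum_univ_two, Fin.sum_univ_two]
    fin_cases x <;> fin_cases y <;>
      simp only [Fin.zero_eta, Fin.mk_one, Fin.isValue, if_true, if_false, show ((0:Fin 2) = 0) = True by simp,
        show ((1:Fin 2) = 0) = False by simp, show ((0:Fin 2) = 1) = False by simp,
        show ((1:Fin 2) = 1) = True by simp, ite_true, ite_false, bern_zero, bern_one,
        add_zero, zero_add] <;>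
      [ (rw [toReal2 (ht0 _) (hq0 z _) (ht0 _) (hq0 z _)]; exact e00 z);
        (rw [toReal2 (ht0 _) (hq0 z _) (ht0 _) (hq0 z _)]; exact e01 z);
        (rw [toReal2 (ht0 _) (hq1' z _) (ht0 _) (hq1' z _)]; exact e10 z);
        (rw [toReal2 (ht0 _) (hq1' z _) (ht0 _) (hq1' z _)]; exact e11 z) ]
  -- law of Z
  have hZpre : ∀ z : Fin K, ((Prod.fst : Fin K × S → Fin K) ⁻¹' {z}) = {z} ×ˢ (Set.univ : Set S) := by
    intro z; exact (Set.prod_univ).symm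
  have hPZ : ∀ z, P ((Prod.fst : Fin K × S → Fin K) ⁻¹' {z}) = ENNReal.ofReal (π z) := by
    intro z
    rw [hZpre, hP, Measure.prod_prod, measure_univ, mul_one, hμ1, mdisc_singleton]
  refine ⟨⟨Fin K × S, P, hPP, Prod.fst, (fun z ω => ω.2.1 z), (fun ω => ω.2.2.1),
      (fun ω => ω.2.2.2), Measurable.of_discrete, (fun z => Measurable.of_discrete),
      Measurable.of_discrete, Measurable.of_discrete, ?_, ?_, ?_⟩, ?_, ?_⟩
  · -- independence
    have hφ : Measurable (fun s : S => (s.2.1, s.2.2, s.1)) := Measurable.of_discrete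
    exact hindep.comp measurable_id hφ
  · -- law_Z
    intro z
    rw [hPZ z, ENNReal.toReal_ofReal (hπpos z).le]
  · -- law_cond
    intro z x y
    have hms : MeasurableSet ((Prod.fst : Fin K × S → Fin K) ⁻¹' {z}) :=
      MeasurableSet.of_discrete
    rw [cond_apply hms]
    have hset : ((Prod.fst : Fin K × S → Fin K) ⁻¹' {z}) ∩
        {ω : Fin K × S | ω.2.1 ω.1 = x ∧ (if ω.2.1 ω.1 = 0 then ω.2.2.1 else ω.2.2.2) = y}
        = {z} ×ˢ {s : S | s.1 z = x ∧ (if x = 0 then s.2.1 else s.2.2) = y} := by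
      ext ω
      simp only [Set.mem_inter_iff, Set.mem_preimage, Set.mem_singleton_iff,
        Set.mem_setOf_eq, Set.mem_prod]
      constructor
      · rintro ⟨hz, hx, hy⟩
        subst hz
        refine ⟨rfl, hx, ?_⟩
        rw [← hx]; exact hy
      · rintro ⟨hz, hx, hy⟩
        subst hz
        refine ⟨rfl, hx, ?_⟩
        rw [hx]; exact hy
    rw [hset, hP, Measure.prod_prod, hμ1, mdisc_singleton, hPZ z]
    rw [← mul_assoc, ENNReal.inv_mul_cancel
      (by simpa using (ENNReal.ofReal_pos.mpr (hπpos z)).ne') ENNReal.ofReal_ne_top, one_mul]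
    exact hEz z x y
  · -- P(Y1 = 1)
    show (P {ω : Fin K × S | ω.2.2.2 = 1}).toReal = t (0,1) + t (1,1)
    have hset : {ω : Fin K × S | ω.2.2.2 = 1} = (Set.univ : Set (Fin K)) ×ˢ {s : S | s.2.2 = 1} := by
      ext ω; simp [Set.mem_prod]
    rw [hset, hP, Measure.prod_prod, measure_univ, one_mul, hμ2E]
    have hpre : ∀ c : Fin 2 × Fin 2,
        (fun f => (f, c.1, c.2)) ⁻¹' {s : S | s.2.2 = 1}
        = if c.2 = 1 then (Set.univ : Set (Fin K → Fin 2)) else ∅ := by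
      intro c; by_cases h : c.2 = 1
      · ext f; rw [if_pos h]; show c.2 = 1 ↔ f ∈ Set.univ; simp [h]
      · ext f; rw [if_neg h]; show c.2 = 1 ↔ f ∈ (∅ : Set _); simp [h]
    rw [Finset.sum_congr rfl (fun c _ => by rw [hpre c])]
    have hterm : ∀ c : Fin 2 × Fin 2,
        ENNReal.ofReal (t c) * (pim c) (if c.2 = 1 then Set.univ else ∅)
        = if c.2 = 1 then ENNReal.ofReal (t c) else 0 := by
      intro c; by_cases h : c.2 = 1
      · rw [if_pos h, if_pos h, measure_univ, mul_one]
      · rw [if_neg h, if_neg h]; simp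
    rw [Finset.sum_congr rfl (fun c _ => hterm c)]
    rw [Fintype.sum_prod_type, Fin.sum_univ_two, Fin.sum_univ_two, Fin.sum_univ_two]
    simp only [show ((0:Fin 2) = 1) = False by simp, show ((1:Fin 2) = 1) = True by simp,
      ite_true, ite_false, add_zero, zero_add]
    rw [← ENNReal.ofReal_add (ht0 _) (ht0 _), ENNReal.toReal_ofReal (add_nonneg (ht0 _) (ht0 _))]
  · -- P(Y0 = 1)
    show (P {ω : Fin K × S | ω.2.2.1 = 1}).toReal = t (1,0) + t (1,1)
    have hset : {ω : Fin K × S | ω.2.2.1 = 1} = (Set.univ : Set (Fin K)) ×ˢ {s : S | s.2.1 = 1} := by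
      ext ω; simp [Set.mem_prod]
    rw [hset, hP, Measure.prod_prod, measure_univ, one_mul, hμ2E]
    have hpre : ∀ c : Fin 2 × Fin 2,
        (fun f => (f, c.1, c.2)) ⁻¹' {s : S | s.2.1 = 1}
        = if c.1 = 1 then (Set.univ : Set (Fin K → Fin 2)) else ∅ := by
      intro c; by_cases h : c.1 = 1
      · ext f; rw [if_pos h]; show c.1 = 1 ↔ f ∈ Set.univ; simp [h]
      · ext f; rw [if_neg h]; show c.1 = 1 ↔ f ∈ (∅ : Set _); simp [h]
    rw [Finset.sum_congr rfl (fun c _ => by rw [hpre c])]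
    have hterm : ∀ c : Fin 2 × Fin 2,
        ENNReal.ofReal (t c) * (pim c) (if c.1 = 1 then Set.univ else ∅)
        = if c.1 = 1 then ENNReal.ofReal (t c) else 0 := by
      intro c; by_cases h : c.1 = 1
      · rw [if_pos h, if_pos h, measure_univ, mul_one]
      · rw [if_neg h, if_neg h]; simp
    rw [Finset.sum_congr rfl (fun c _ => hterm c)]
    rw [Fintype.sum_prod_type, Fin.sum_univ_two, Fin.sum_univ_two, Fin.sum_univ_two]
    simp only [show ((0:Fin 2) = 1) = False by simp, show ((1:Fin 2) = 1) = True by simp,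
      ite_true, ite_false, add_zero, zero_add]
    rw [← ENNReal.ofReal_add (ht0 _) (ht0 _), ENNReal.toReal_ofReal (add_nonneg (ht0 _) (ht0 _))]

section MeasHelp
variable {Ω : Type*} [MeasurableSpace Ω] (P : Measure Ω) [IsFiniteMeasure P]

lemma tmono {A B : Set Ω} (h : A ⊆ B) : (P A).toReal ≤ (P B).toReal :=
  ENNReal.toReal_mono (measure_ne_top P B) (measure_mono h)

lemma tle_add {A B C : Set Ω} (h : A ⊆ B ∪ C) :
    (P A).toReal ≤ (P B).toReal + (P C).toReal := by
  have h1 : P A ≤ P B + P C := le_trans (measure_mono h) (measure_union_le B C)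
  have h2 := ENNReal.toReal_mono
    (ENNReal.add_ne_top.mpr ⟨measure_ne_top P B, measure_ne_top P C⟩) h1
  rwa [ENNReal.toReal_add (measure_ne_top P B) (measure_ne_top P C)] at h2

lemma tle_add3 {A B C D : Set Ω} (h : A ⊆ B ∪ C ∪ D) :
    (P A).toReal ≤ (P B).toReal + (P C).toReal + (P D).toReal := by
  have h1 := tle_add P h
  have h2 := tle_add P (le_refl (B ∪ C))
  linarith

lemma tle_add4 {A B C D E : Set Ω} (h : A ⊆ B ∪ C ∪ D ∪ E) :
    (P A).toReal ≤ (P B).toReal + (P C).toReal + (P D).toReal + (P E).toReal := by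
  have h1 := tle_add P h
  have h2 := tle_add3 P (le_refl (B ∪ C ∪ D))
  linarith

end MeasHelp

lemma extract {K : ℕ} {π : Fin K → ℝ} {p : Fin K → Fin 2 → Fin 2 → ℝ}
    (hπpos : ∀ z, 0 < π z) (M : IVModel K π p) :
    (∑ z, π z = 1) ∧ (∀ z x y, 0 ≤ p z x y)
    ∧ (∀ z, p z 0 0 + p z 0 1 + p z 1 0 + p z 1 1 = 1)
    ∧ (∃ u0 v1 : ℝ,
        (∀ z, p z 0 0 ≤ u0) ∧ (∀ z, p z 1 1 ≤ v1)
      ∧ (∀ z, u0 ≤ p z 0 0 + p z 1 0 + p z 1 1)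
      ∧ (∀ z, v1 ≤ p z 1 1 + p z 0 0 + p z 0 1)
      ∧ (∀ z z', u0 ≤ p z 0 0 + p z 1 0 + p z' 0 0 + p z' 1 1)
      ∧ (∀ z z', v1 ≤ p z 1 1 + p z 0 0 + p z' 1 1 + p z' 0 1)
      ∧ (∀ z z', p z 1 1 + p z 0 1 + p z' 0 0 + p z' 1 1 ≤ 1 + v1)
      ∧ (∀ z z', p z' 0 0 + p z' 1 1 ≤ u0 + p z 1 1 + p z 0 1)) := by
  classical
  obtain ⟨Ω, P, prob, Z, Xz, Y0, Y1, hZ, hXz, hY0, hY1, indep, law_Z, law_cond⟩ := M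
  haveI := prob
  set F : Fin K → Fin 2 → Fin 2 → Set Ω :=
    (fun z x y => {ω | Xz z ω = x ∧ (if Xz z ω = 0 then Y0 ω else Y1 ω) = y}) with hF
  have two : ∀ v : Fin 2, v = 0 ∨ v = 1 := by decide
  have hg : ∀ z, Measurable (fun ω => (Xz z ω, if Xz z ω = 0 then Y0 ω else Y1 ω)) := by
    intro z
    exact (hXz z).prodMk (Measurable.ite ((hXz z) (measurableSet_singleton 0)) hY0 hY1)
  have hFg : ∀ z x y,
      F z x y = (fun ω => (Xz z ω, if Xz z ω = 0 then Y0 ω else Y1 ω)) ⁻¹' {(x, y)} := by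
    intro z x y
    ext ω; simp [hF, Prod.ext_iff]
  have hFm : ∀ z x y, MeasurableSet (F z x y) := by
    intro z x y; rw [hFg]; exact (hg z) (measurableSet_singleton _)
  -- the law of Z sums to one
  have hπ1 : ∑ z, π z = 1 := by
    have h1 : ∑ z : Fin K, P (Z ⁻¹' {z}) = P (Z ⁻¹' (↑(Finset.univ : Finset (Fin K)))) :=
      sum_measure_preimage_singleton _ (fun z _ => hZ (measurableSet_singleton z))
    rw [Finset.coe_univ, Set.preimage_univ, measure_univ] at h1
    calc ∑ z, π z = ∑ z : Fin K, (P (Z ⁻¹' {z})).toReal := by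
          refine Finset.sum_congr rfl (fun z _ => (law_Z z).symm)
      _ = (∑ z : Fin K, P (Z ⁻¹' {z})).toReal :=
          (ENNReal.toReal_sum (fun z _ => measure_ne_top _ _)).symm
      _ = 1 := by rw [h1]; simp
  -- p in terms of unconditional probabilities
  have key : ∀ z x y, p z x y = (P (F z x y)).toReal := by
    intro z x y
    rw [← law_cond z x y, cond_apply (hZ (measurableSet_singleton z))]
    have hPZ : P (Z ⁻¹' {z}) = ENNReal.ofReal (π z) := by
      rw [← law_Z z, ENNReal.ofReal_toReal (measure_ne_top P _)]
    set B : Set (Fin 2 × Fin 2 × (Fin K → Fin 2)) :=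
      {w | w.2.2 z = x ∧ (if w.2.2 z = 0 then w.1 else w.2.1) = y} with hB
    have hW : (Z ⁻¹' {z}) ∩ {ω | Xz (Z ω) ω = x ∧ (if Xz (Z ω) ω = 0 then Y0 ω else Y1 ω) = y}
        = (Z ⁻¹' {z}) ∩ ((fun ω => (Y0 ω, Y1 ω, fun z' => Xz z' ω)) ⁻¹' B) := by
      ext ω
      simp only [Set.mem_inter_iff, Set.mem_preimage, Set.mem_singleton_iff, Set.mem_setOf_eq, hB]
      constructor
      · rintro ⟨hz, h1, h2⟩; rw [hz] at h1 h2; exact ⟨hz, h1, h2⟩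
      · rintro ⟨hz, h1, h2⟩; rw [← hz] at h1 h2; exact ⟨hz, h1, h2⟩
    rw [hW, indep.measure_inter_preimage_eq_mul {z} B (measurableSet_singleton z)
      MeasurableSet.of_discrete, hPZ]
    rw [← mul_assoc, ENNReal.inv_mul_cancel
      (ENNReal.ofReal_pos.mpr (hπpos z)).ne' ENNReal.ofReal_ne_top, one_mul]
    rfl
  have hp0 : ∀ z x y, 0 ≤ p z x y := by
    intro z x y; rw [key]; exact ENNReal.toReal_nonneg
  -- the four events partition
  have hsum1 : ∀ z, p z 0 0 + p z 0 1 + p z 1 0 + p z 1 1 = 1 := by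
    intro z
    have h1 : ∑ c : Fin 2 × Fin 2,
        P ((fun ω => (Xz z ω, if Xz z ω = 0 then Y0 ω else Y1 ω)) ⁻¹' {c})
        = P ((fun ω => (Xz z ω, if Xz z ω = 0 then Y0 ω else Y1 ω)) ⁻¹'
            (↑(Finset.univ : Finset (Fin 2 × Fin 2)))) :=
      sum_measure_preimage_singleton _ (fun c _ => (hg z) (measurableSet_singleton c))
    rw [Finset.coe_univ, Set.preimage_univ, measure_univ] at h1
    have h2 : ∑ c : Fin 2 × Fin 2, p z c.1 c.2 = 1 := by
      calc ∑ c : Fin 2 × Fin 2, p z c.1 c.2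
          = ∑ c : Fin 2 × Fin 2,
            (P ((fun ω => (Xz z ω, if Xz z ω = 0 then Y0 ω else Y1 ω)) ⁻¹' {c})).toReal := by
            refine Finset.sum_congr rfl (fun c _ => ?_)
            rw [key z c.1 c.2, hFg]
        _ = (∑ c : Fin 2 × Fin 2,
            P ((fun ω => (Xz z ω, if Xz z ω = 0 then Y0 ω else Y1 ω)) ⁻¹' {c})).toReal :=
            (ENNReal.toReal_sum (fun c _ => measure_ne_top _ _)).symm
        _ = 1 := by rw [h1]; simp
    rw [Fintype.sum_prod_type, Fin.sum_univ_two, Fin.sum_univ_two, Fin.sum_univ_two] at h2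
    linarith
  refine ⟨hπ1, hp0, hsum1, (P {ω | Y0 ω = 0}).toReal, (P {ω | Y1 ω = 1}).toReal,
    ?_, ?_, ?_, ?_, ?_, ?_, ?_, ?_⟩
  · -- α z ≤ u0
    intro z
    rw [key]
    refine tmono P ?_
    rintro ω ⟨h1, h2⟩
    rw [if_pos h1] at h2; exact h2
  · -- δ z ≤ v1
    intro z
    rw [key]
    refine tmono P ?_
    rintro ω ⟨h1, h2⟩
    rw [h1] at h2; simpa using h2
  · -- u0 ≤ α + γ + δ
    intro z
    rw [key, key, key]
    refine tle_add3 P ?_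
    intro ω (hY : Y0 ω = 0)
    rcases two (Xz z ω) with hx | hx
    · exact Or.inl (Or.inl ⟨hx, by rw [if_pos hx]; exact hY⟩)
    · rcases two (Y1 ω) with hy | hy
      · exact Or.inl (Or.inr ⟨hx, by rw [hx]; simpa using hy⟩)
      · exact Or.inr ⟨hx, by rw [hx]; simpa using hy⟩
  · -- v1 ≤ δ + α + β
    intro z
    rw [key, key, key]
    refine tle_add3 P ?_
    intro ω (hY : Y1 ω = 1)
    rcases two (Xz z ω) with hx | hx
    · rcases two (Y0 ω) with hy | hy
      · exact Or.inl (Or.inr ⟨hx, by rw [if_pos hx]; exact hy⟩)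
      · exact Or.inr ⟨hx, by rw [if_pos hx]; exact hy⟩
    · exact Or.inl (Or.inl ⟨hx, by rw [hx]; simpa using hY⟩)
  · -- u0 ≤ α z + γ z + α z' + δ z'
    intro z z'
    rw [key, key, key, key]
    refine tle_add4 P ?_
    intro ω (hY : Y0 ω = 0)
    rcases two (Xz z ω) with hx | hx
    · exact Or.inl (Or.inl (Or.inl ⟨hx, by rw [if_pos hx]; exact hY⟩))
    · rcases two (Y1 ω) with hy | hy
      · exact Or.inl (Or.inl (Or.inr ⟨hx, by rw [hx]; simpa using hy⟩))
      · rcases two (Xz z' ω) with hx' | hx'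
        · exact Or.inl (Or.inr ⟨hx', by rw [if_pos hx']; exact hY⟩)
        · exact Or.inr ⟨hx', by rw [hx']; simpa using hy⟩
  · -- v1 ≤ δ z + α z + δ z' + β z'
    intro z z'
    rw [key, key, key, key]
    refine tle_add4 P ?_
    intro ω (hY : Y1 ω = 1)
    rcases two (Xz z ω) with hx | hx
    · rcases two (Y0 ω) with hy | hy
      · exact Or.inl (Or.inl (Or.inr ⟨hx, by rw [if_pos hx]; exact hy⟩))
      · rcases two (Xz z' ω) with hx' | hx'
        · exact Or.inr ⟨hx', by rw [if_pos hx']; exact hy⟩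
        · exact Or.inl (Or.inr ⟨hx', by rw [hx']; simpa using hY⟩)
    · exact Or.inl (Or.inl (Or.inl ⟨hx, by rw [hx]; simpa using hY⟩))
  · -- δ z + β z + α z' + δ z' ≤ 1 + v1
    intro z z'
    set A := F z 1 1 with hA
    set B := F z' 1 1 with hB
    set I := A ∩ B with hI
    have hImeas : MeasurableSet I := (hFm z 1 1).inter (hFm z' 1 1)
    have r1 : p z 1 1 + p z' 1 1 ≤ (P {ω | Y1 ω = 1}).toReal + (P I).toReal := by
      have hU : A ∪ B ⊆ {ω | Y1 ω = 1} := by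
        rintro ω (⟨h1, h2⟩ | ⟨h1, h2⟩) <;> · rw [h1] at h2; simpa using h2
      have h3 : P A + P B ≤ P {ω | Y1 ω = 1} + P I := by
        rw [← measure_union_add_inter A (hFm z' 1 1)]
        exact add_le_add (measure_mono hU) le_rfl
      have h4 := ENNReal.toReal_mono
        (ENNReal.add_ne_top.mpr ⟨measure_ne_top _ _, measure_ne_top _ _⟩) h3
      rw [ENNReal.toReal_add (measure_ne_top _ _) (measure_ne_top _ _),
        ENNReal.toReal_add (measure_ne_top _ _) (measure_ne_top _ _)] at h4
      rw [key, key]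
      exact h4
    have r2 : p z 0 1 + p z' 0 0 + (P I).toReal ≤ 1 := by
      have d1 : Disjoint (F z 0 1) (F z' 0 0) := by
        rw [Set.disjoint_left]
        rintro ω ⟨h1, h2⟩ ⟨h3, h4⟩
        rw [if_pos h1] at h2; rw [if_pos h3] at h4
        rw [h2] at h4; exact absurd h4 (by decide)
      have d2 : Disjoint (F z 0 1 ∪ F z' 0 0) I := by
        rw [Set.disjoint_left]
        rintro ω (⟨h1, _⟩ | ⟨h1, _⟩) ⟨⟨h3, _⟩, ⟨h4, _⟩⟩
        · rw [h1] at h3; exact absurd h3 (by decide)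
        · rw [h1] at h4; exact absurd h4 (by decide)
      have e1 : P (F z 0 1) + P (F z' 0 0) + P I = P (F z 0 1 ∪ F z' 0 0 ∪ I) := by
        rw [measure_union d2 hImeas, measure_union d1 (hFm z' 0 0)]
      have e2 : P (F z 0 1 ∪ F z' 0 0 ∪ I) ≤ 1 := prob_le_one
      have e3 : P (F z 0 1) + P (F z' 0 0) + P I ≤ 1 := by rw [e1]; exact e2
      have h4 := ENNReal.toReal_mono (by simp) e3
      rw [ENNReal.toReal_add (ENNReal.add_ne_top.mpr ⟨measure_ne_top _ _, measure_ne_top _ _⟩)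
        (measure_ne_top _ _),
        ENNReal.toReal_add (measure_ne_top _ _) (measure_ne_top _ _)] at h4
      simp only [ENNReal.toReal_one] at h4
      rw [key, key]
      exact h4
    linarith
  · -- α z' + δ z' ≤ u0 + δ z + β z
    intro z z'
    set D1 := F z' 1 1 ∩ {ω | Y0 ω = 0} with hD1
    set D2 := F z' 1 1 ∩ {ω | Y0 ω = 1} with hD2
    have hD1m : MeasurableSet D1 := (hFm z' 1 1).inter (hY0 (measurableSet_singleton 0))
    have hD2m : MeasurableSet D2 := (hFm z' 1 1).inter (hY0 (measurableSet_singleton 1))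
    have hsplit : p z' 1 1 = (P D1).toReal + (P D2).toReal := by
      have hd : Disjoint D1 D2 := by
        rw [Set.disjoint_left]
        rintro ω ⟨_, h1⟩ ⟨_, h2⟩
        rw [Set.mem_setOf_eq] at h1 h2
        rw [h1] at h2; exact absurd h2 (by decide)
      have hu : F z' 1 1 = D1 ∪ D2 := by
        ext ω
        simp only [hD1, hD2, Set.mem_union, Set.mem_inter_iff, Set.mem_setOf_eq]
        constructor
        · intro h; rcases two (Y0 ω) with hy | hy
          · exact Or.inl ⟨h, hy⟩
          · exact Or.inr ⟨h, hy⟩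
        · rintro (⟨h, _⟩ | ⟨h, _⟩) <;> exact h
      rw [key, hu, measure_union hd hD2m,
        ENNReal.toReal_add (measure_ne_top _ _) (measure_ne_top _ _)]
    have r1 : p z' 0 0 + (P D1).toReal ≤ (P {ω | Y0 ω = 0}).toReal := by
      have hd : Disjoint (F z' 0 0) D1 := by
        rw [Set.disjoint_left]
        rintro ω ⟨h1, _⟩ ⟨⟨h3, _⟩, _⟩
        rw [h1] at h3; exact absurd h3 (by decide)
      have hsub : F z' 0 0 ∪ D1 ⊆ {ω | Y0 ω = 0} := by
        rintro ω (⟨h1, h2⟩ | ⟨_, h2⟩)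
        · rw [if_pos h1] at h2; exact h2
        · exact h2
      have h3 : P (F z' 0 0) + P D1 ≤ P {ω | Y0 ω = 0} := by
        rw [← measure_union hd hD1m]; exact measure_mono hsub
      have h4 := ENNReal.toReal_mono (measure_ne_top _ _) h3
      rw [ENNReal.toReal_add (measure_ne_top _ _) (measure_ne_top _ _)] at h4
      rw [key]
      exact h4
    have r2 : (P D2).toReal ≤ p z 0 1 + p z 1 1 := by
      rw [key, key]
      refine tle_add P ?_
      rintro ω ⟨⟨h1, h2⟩, h3⟩
      rw [h1] at h2
      rw [Set.mem_setOf_eq] at h3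
      rcases two (Xz z ω) with hx | hx
      · exact Or.inl ⟨hx, by rw [if_pos hx]; exact h3⟩
      · exact Or.inr ⟨hx, by rw [hx]; simpa using h2⟩
    linarith

noncomputable def sdiv (a b : ℝ) : ℝ := if b = 0 then 0 else a / b

lemma sdiv_facts {a b : ℝ} (h0 : 0 ≤ a) (h1 : a ≤ b) :
    0 ≤ sdiv a b ∧ sdiv a b ≤ 1 ∧ b * sdiv a b = a ∧ b * (1 - sdiv a b) = b - a := by
  unfold sdiv
  by_cases hb : b = 0
  · subst hb
    have ha : a = 0 := le_antisymm h1 h0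
    simp [ha]
  · have hbpos : 0 < b := lt_of_le_of_ne (le_trans h0 h1) (Ne.symm hb)
    rw [if_neg hb]
    refine ⟨div_nonneg h0 hbpos.le, (div_le_one hbpos).mpr h1, ?_, ?_⟩
    · field_simp
    · field_simp

set_option maxHeartbeats 2000000 in
lemma first {K : ℕ} (hK : 2 ≤ K) (π : Fin K → ℝ) (p : Fin K → Fin 2 → Fin 2 → ℝ)
    (hπpos : ∀ z, 0 < π z) (hπ1 : ∑ z, π z = 1)
    (hp0 : ∀ z x y, 0 ≤ p z x y)
    (hsum : ∀ z, p z 0 0 + p z 0 1 + p z 1 0 + p z 1 1 = 1)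
    (u0 v1 : ℝ)
    (h3 : ∀ z, p z 0 0 ≤ u0) (h4 : ∀ z, p z 1 1 ≤ v1)
    (h5 : ∀ z, u0 ≤ p z 0 0 + p z 1 0 + p z 1 1)
    (h6 : ∀ z, v1 ≤ p z 1 1 + p z 0 0 + p z 0 1)
    (h7 : ∀ z z', u0 ≤ p z 0 0 + p z 1 0 + p z' 0 0 + p z' 1 1)
    (h8 : ∀ z z', v1 ≤ p z 1 1 + p z 0 0 + p z' 1 1 + p z' 0 1)
    (h9 : ∀ z z', p z 1 1 + p z 0 1 + p z' 0 0 + p z' 1 1 ≤ 1 + v1)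
    (h10 : ∀ z z', p z' 0 0 + p z' 1 1 ≤ u0 + p z 1 1 + p z 0 1) :
    ∃ M : IVModel K π p,
      (M.P {ω | M.Y1 ω = 1}).toReal - (M.P {ω | M.Y0 ω = 1}).toReal =
        gOf hK p 0 0 + gOf hK p 1 1 - 1 := by
  classical
  have hne : (Finset.univ : Finset (Fin K)).Nonempty := ⟨⟨0, by omega⟩, Finset.mem_univ _⟩
  set z₀ : Fin K := ⟨0, by omega⟩ with hz₀
  set g0 : ℝ := gOf hK p 0 0 with hg0
  set g1 : ℝ := gOf hK p 1 1 with hg1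
  -- unfold gOf
  have hg0eq : g0 = min
      ((Finset.univ : Finset (Fin K)).inf' hne (fun z => p z 0 0 + (p z 1 0 + p z 1 1)))
      (((Finset.univ : Finset (Fin K × Fin K)).filter (fun q => q.1 ≠ q.2)).inf'
        ⟨(⟨0, by omega⟩, ⟨1, by omega⟩), by
          simp only [Finset.mem_filter, Finset.mem_univ, true_and]
          exact fun h => absurd (congrArg Fin.val h) (by simp)⟩
        (fun q => p q.1 0 0 + p q.1 1 0 + p q.2 0 0 + p q.2 1 1)) := by
    rw [hg0, gOf]
    congr 1
  have hg1eq : g1 = min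
      ((Finset.univ : Finset (Fin K)).inf' hne (fun z => p z 1 1 + (p z 0 0 + p z 0 1)))
      (((Finset.univ : Finset (Fin K × Fin K)).filter (fun q => q.1 ≠ q.2)).inf'
        ⟨(⟨0, by omega⟩, ⟨1, by omega⟩), by
          simp only [Finset.mem_filter, Finset.mem_univ, true_and]
          exact fun h => absurd (congrArg Fin.val h) (by simp)⟩
        (fun q => p q.1 1 1 + p q.1 0 0 + p q.2 1 1 + p q.2 0 1)) := by
    rw [hg1, gOf]
    congr 1
  have Ga1 : ∀ z, g0 ≤ p z 0 0 + p z 1 0 + p z 1 1 := by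
    intro z
    have := le_trans (hg0eq ▸ min_le_left _ _) (Finset.inf'_le _ (Finset.mem_univ z))
    linarith [this]
  have Gb1 : ∀ z, g1 ≤ p z 1 1 + p z 0 0 + p z 0 1 := by
    intro z
    have := le_trans (hg1eq ▸ min_le_left _ _) (Finset.inf'_le _ (Finset.mem_univ z))
    linarith [this]
  have Ga2 : ∀ z z', g0 ≤ p z 0 0 + p z 1 0 + p z' 0 0 + p z' 1 1 := by
    intro z z'
    by_cases hzz : z = z'
    · subst hzz
      have := Ga1 z
      have := hp0 z 0 0
      linarith
    · have hmem : (z, z') ∈ (Finset.univ : Finset (Fin K × Fin K)).filter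
        (fun q => q.1 ≠ q.2) := by
        simp only [Finset.mem_filter, Finset.mem_univ, true_and]
        exact hzz
      exact le_trans (hg0eq ▸ min_le_right _ _) (Finset.inf'_le _ hmem)
  have Gb2 : ∀ z z', g1 ≤ p z 1 1 + p z 0 0 + p z' 1 1 + p z' 0 1 := by
    intro z z'
    by_cases hzz : z = z'
    · subst hzz
      have := Gb1 z
      have := hp0 z 1 1
      linarith
    · have hmem : (z, z') ∈ (Finset.univ : Finset (Fin K × Fin K)).filter
        (fun q => q.1 ≠ q.2) := by
        simp only [Finset.mem_filter, Finset.mem_univ, true_and]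
        exact hzz
      exact le_trans (hg1eq ▸ min_le_right _ _) (Finset.inf'_le _ hmem)
  have Gu : u0 ≤ g0 := by
    rw [hg0eq]
    refine le_min (Finset.le_inf' _ _ (fun z _ => by linarith [h5 z]))
      (Finset.le_inf' _ _ (fun c _ => h7 c.1 c.2))
  have Gv : v1 ≤ g1 := by
    rw [hg1eq]
    refine le_min (Finset.le_inf' _ _ (fun z _ => by linarith [h6 z]))
      (Finset.le_inf' _ _ (fun c _ => h8 c.1 c.2))
  have hαg0 : ∀ z, p z 0 0 ≤ g0 := fun z => le_trans (h3 z) Gu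
  have hδg1 : ∀ z, p z 1 1 ≤ g1 := fun z => le_trans (h4 z) Gv
  have H9 : ∀ z z', p z 1 1 + p z 0 1 + p z' 0 0 + p z' 1 1 ≤ 1 + g1 := by
    intro z z'; linarith [h9 z z', Gv]
  have H10 : ∀ z z', p z' 0 0 + p z' 1 1 ≤ g0 + p z 1 1 + p z 0 1 := by
    intro z z'; linarith [h10 z z', Gu]
  -- definition of t
  set A : Fin K → ℝ := fun z => g0 + p z 1 1 + p z 0 1 - 1 with hA
  set C : Fin K → ℝ := fun z => g1 - p z 1 1 - p z 0 1 with hC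
  set t : ℝ := max (max 0 (g0 + g1 - 1))
    (Finset.sup' Finset.univ hne (fun z => max (A z) (C z))) with ht
  have t0 : 0 ≤ t := le_trans (le_max_left _ _) (le_max_left _ _)
  have tg : g0 + g1 - 1 ≤ t := le_trans (le_max_right _ _) (le_max_left _ _)
  have tA : ∀ z, A z ≤ t := fun z =>
    le_trans (le_trans (le_max_left (A z) (C z))
        (Finset.le_sup' (fun z => max (A z) (C z)) (Finset.mem_univ z)))
      (le_max_right _ _)
  have tC : ∀ z, C z ≤ t := fun z =>
    le_trans (le_trans (le_max_right (A z) (C z))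
        (Finset.le_sup' (fun z => max (A z) (C z)) (Finset.mem_univ z)))
      (le_max_right _ _)
  have g1le1 : g1 ≤ 1 := by linarith [Gb1 z₀, hsum z₀, hp0 z₀ 1 0]
  have g0le1 : g0 ≤ 1 := by linarith [Ga1 z₀, hsum z₀, hp0 z₀ 0 1]
  have g0nn : 0 ≤ g0 := le_trans (hp0 z₀ 0 0) (hαg0 z₀)
  have g1nn : 0 ≤ g1 := le_trans (hp0 z₀ 1 1) (hδg1 z₀)
  have T1 : t ≤ g0 := by
    rw [ht]
    refine max_le (max_le g0nn (by linarith)) (Finset.sup'_le _ _ (fun z _ => max_le ?_ ?_))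
    · rw [hA]; simp only; linarith [hsum z, hp0 z 0 0, hp0 z 1 0]
    · rw [hC]; simp only; linarith [Gb1 z, hαg0 z]
  have T2 : t ≤ g1 := by
    rw [ht]
    refine max_le (max_le g1nn (by linarith)) (Finset.sup'_le _ _ (fun z _ => max_le ?_ ?_))
    · rw [hA]; simp only; linarith [Ga1 z, hsum z, hδg1 z]
    · rw [hC]; simp only; linarith [hp0 z 1 1, hp0 z 0 1]
  have T3 : ∀ z, t ≤ p z 0 0 + p z 1 1 := by
    intro z
    rw [ht]
    refine max_le (max_le (by linarith [hp0 z 0 0, hp0 z 1 1])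
      (by linarith [Ga1 z, Gb1 z, hsum z]))
      (Finset.sup'_le _ _ (fun z' _ => max_le ?_ ?_))
    · rw [hA]; simp only; linarith [Ga2 z' z, hsum z']
    · rw [hC]; simp only; linarith [Gb2 z z']
  have T4 : ∀ z, t ≤ g0 + g1 - p z 0 0 - p z 1 1 := by
    intro z
    rw [ht]
    refine max_le (max_le (by linarith [hαg0 z, hδg1 z])
      (by linarith [hsum z, hp0 z 0 1, hp0 z 1 0]))
      (Finset.sup'_le _ _ (fun z' _ => max_le ?_ ?_))
    · rw [hA]; simp only; linarith [H9 z' z, hsum z']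
    · rw [hC]; simp only; linarith [H10 z' z]
  -- definition of s
  set s : Fin K → ℝ := fun z =>
    max (max 0 (t - p z 1 1)) (max (C z) (t + p z 0 0 - g0)) with hs
  have s0 : ∀ z, 0 ≤ s z := fun z => le_trans (le_max_left _ _) (le_max_left _ _)
  have s1 : ∀ z, t - p z 1 1 ≤ s z := fun z =>
    le_trans (le_max_right _ _) (le_max_left _ _)
  have s2 : ∀ z, C z ≤ s z := fun z => le_trans (le_max_left _ _) (le_max_right _ _)
  have s3 : ∀ z, t + p z 0 0 - g0 ≤ s z := fun z =>
    le_trans (le_max_right _ _) (le_max_right _ _)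
  have U1 : ∀ z, s z ≤ p z 0 0 := by
    intro z
    rw [hs]
    refine max_le (max_le (hp0 z 0 0) (by linarith [T3 z]))
      (max_le ?_ (by linarith [T1]))
    rw [hC]; simp only; linarith [Gb1 z]
  have U2 : ∀ z, s z ≤ t := by
    intro z
    refine max_le (max_le t0 (by linarith [hp0 z 1 1])) (max_le (tC z) (by linarith [hαg0 z]))
  have U3 : ∀ z, s z ≤ g1 - p z 1 1 := by
    intro z
    rw [hs]
    refine max_le (max_le (by linarith [hδg1 z]) (by linarith [T2]))
      (max_le ?_ (by linarith [T4 z]))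
    rw [hC]; simp only; linarith [hp0 z 0 1]
  have U4 : ∀ z, s z ≤ t + 1 - g0 - p z 1 1 - p z 0 1 := by
    intro z
    rw [hs]
    refine max_le (max_le ?_ ?_) (max_le ?_ ?_)
    · have := tA z; rw [hA] at this; simp only at this; linarith
    · linarith [Ga1 z, hsum z]
    · rw [hC]; simp only; linarith [tg]
    · linarith [hsum z, hp0 z 1 0]
  -- cell masses
  have m00 : ∀ z, 0 ≤ p z 0 0 - s z ∧ p z 0 0 - s z ≤ g0 - t := by
    intro z; constructor
    · linarith [U1 z]
    · linarith [s3 z]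
  have m01 : ∀ z, 0 ≤ s z ∧ s z ≤ t := fun z => ⟨s0 z, U2 z⟩
  have m10 : ∀ z, 0 ≤ p z 0 1 - g1 + p z 1 1 + s z ∧
      p z 0 1 - g1 + p z 1 1 + s z ≤ 1 - g0 - g1 + t := by
    intro z; constructor
    · have := s2 z; rw [hC] at this; simp only at this; linarith
    · linarith [U4 z]
  have m11 : ∀ z, 0 ≤ g1 - p z 1 1 - s z ∧ g1 - p z 1 1 - s z ≤ g1 - t := by
    intro z; constructor
    · linarith [U3 z]
    · linarith [s1 z]
  -- the cell distribution and conditionals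
  set tc : Fin 2 × Fin 2 → ℝ := fun c =>
    if c.1 = 0 then (if c.2 = 0 then g0 - t else t)
    else (if c.2 = 0 then 1 - g0 - g1 + t else g1 - t) with htc
  set q : Fin K → Fin 2 × Fin 2 → ℝ := fun z c =>
    if c.1 = 0 then (if c.2 = 0 then sdiv (p z 0 0 - s z) (g0 - t) else sdiv (s z) t)
    else (if c.2 = 0 then sdiv (p z 0 1 - g1 + p z 1 1 + s z) (1 - g0 - g1 + t)
      else sdiv (g1 - p z 1 1 - s z) (g1 - t)) with hq
  have htc00 : tc (0, 0) = g0 - t := by simp [htc]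
  have htc01 : tc (0, 1) = t := by norm_num [htc]
  have htc10 : tc (1, 0) = 1 - g0 - g1 + t := by norm_num [htc]
  have htc11 : tc (1, 1) = g1 - t := by norm_num [htc]
  have hq00 : ∀ z, q z (0, 0) = sdiv (p z 0 0 - s z) (g0 - t) := by intro z; simp [hq]
  have hq01 : ∀ z, q z (0, 1) = sdiv (s z) t := by intro z; norm_num [hq]
  have hq10 : ∀ z, q z (1, 0) = sdiv (p z 0 1 - g1 + p z 1 1 + s z) (1 - g0 - g1 + t) := by
    intro z; norm_num [hq]
  have hq11 : ∀ z, q z (1, 1) = sdiv (g1 - p z 1 1 - s z) (g1 - t) := by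
    intro z; norm_num [hq]
  have two : ∀ v : Fin 2, v = 0 ∨ v = 1 := by decide
  obtain ⟨M, hY1, hY0⟩ := build π p tc q hπpos hπ1
    (by
      intro c
      rcases two c.1 with h1 | h1 <;> rcases two c.2 with h2 | h2 <;>
        simp only [htc, h1, h2] <;> norm_num <;> linarith [T1, T2, t0, tg])
    (by
      rw [Fintype.sum_prod_type, Fin.sum_univ_two, Fin.sum_univ_two, Fin.sum_univ_two,
        htc00, htc01, htc10, htc11]
      ring)
    (by
      intro z c
      rcases two c.1 with h1 | h1 <;> rcases two c.2 with h2 | h2 <;>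
        rw [show c = (c.1, c.2) from rfl, h1, h2]
      · rw [hq00]; exact ((sdiv_facts (m00 z).1 (m00 z).2).1)
      · rw [hq01]; exact ((sdiv_facts (m01 z).1 (m01 z).2).1)
      · rw [hq10]; exact ((sdiv_facts (m10 z).1 (m10 z).2).1)
      · rw [hq11]; exact ((sdiv_facts (m11 z).1 (m11 z).2).1))
    (by
      intro z c
      rcases two c.1 with h1 | h1 <;> rcases two c.2 with h2 | h2 <;>
        rw [show c = (c.1, c.2) from rfl, h1, h2]
      · rw [hq00]; exact ((sdiv_facts (m00 z).1 (m00 z).2).2.1)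
      · rw [hq01]; exact ((sdiv_facts (m01 z).1 (m01 z).2).2.1)
      · rw [hq10]; exact ((sdiv_facts (m10 z).1 (m10 z).2).2.1)
      · rw [hq11]; exact ((sdiv_facts (m11 z).1 (m11 z).2).2.1))
    (by
      intro z
      rw [htc00, htc01, hq00, hq01,
        (sdiv_facts (m00 z).1 (m00 z).2).2.2.1, (sdiv_facts (m01 z).1 (m01 z).2).2.2.1]
      ring)
    (by
      intro z
      rw [htc10, htc11, hq10, hq11,
        (sdiv_facts (m10 z).1 (m10 z).2).2.2.1, (sdiv_facts (m11 z).1 (m11 z).2).2.2.1]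
      ring)
    (by
      intro z
      rw [htc00, htc10, hq00, hq10,
        (sdiv_facts (m00 z).1 (m00 z).2).2.2.2, (sdiv_facts (m10 z).1 (m10 z).2).2.2.2]
      linarith [hsum z])
    (by
      intro z
      rw [htc01, htc11, hq01, hq11,
        (sdiv_facts (m01 z).1 (m01 z).2).2.2.2, (sdiv_facts (m11 z).1 (m11 z).2).2.2.2]
      ring)
  refine ⟨M, ?_⟩
  rw [hY1, hY0, htc01, htc10, htc11]
  ring

lemma flipModel {K : ℕ} {π : Fin K → ℝ} {p pf : Fin K → Fin 2 → Fin 2 → ℝ}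
    (hpf : ∀ z x y, pf z x y = p z x (1 - y)) (M : IVModel K π p) :
    ∃ M' : IVModel K π pf,
      (M'.P {ω | M'.Y1 ω = 1}).toReal = 1 - (M.P {ω | M.Y1 ω = 1}).toReal ∧
      (M'.P {ω | M'.Y0 ω = 1}).toReal = 1 - (M.P {ω | M.Y0 ω = 1}).toReal := by
  classical
  obtain ⟨Ω, P, prob, Z, Xz, Y0, Y1, hZ, hXz, hY0, hY1, indep, law_Z, law_cond⟩ := M
  haveI := prob
  have two : ∀ v : Fin 2, v = 0 ∨ v = 1 := by decide
  have hcompl : ∀ (Y : Ω → Fin 2), Measurable Y →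
      (P {ω | (1 : Fin 2) - Y ω = 1}).toReal = 1 - (P {ω | Y ω = 1}).toReal := by
    intro Y hY
    have hset : {ω | (1 : Fin 2) - Y ω = 1} = {ω | Y ω = 1}ᶜ := by
      ext ω
      simp only [Set.mem_setOf_eq, Set.mem_compl_iff]
      constructor
      · intro h h2; rw [h2] at h; exact absurd h (by decide)
      · intro h
        rcases two (Y ω) with h2 | h2
        · rw [h2]; rfl
        · exact absurd h2 h
    rw [hset, prob_compl_eq_one_sub (s := {ω | Y ω = 1}) (hY (measurableSet_singleton 1)),
      ENNReal.toReal_sub_of_le prob_le_one ENNReal.one_ne_top, ENNReal.toReal_one]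
  refine ⟨⟨Ω, P, prob, Z, Xz, (fun ω => 1 - Y0 ω), (fun ω => 1 - Y1 ω), hZ, hXz,
    (Measurable.of_discrete (f := fun v : Fin 2 => 1 - v)).comp hY0,
    (Measurable.of_discrete (f := fun v : Fin 2 => 1 - v)).comp hY1, ?_, law_Z, ?_⟩, ?_, ?_⟩
  · exact indep.comp measurable_id
      (Measurable.of_discrete
        (f := fun w : Fin 2 × Fin 2 × (Fin K → Fin 2) => (1 - w.1, 1 - w.2.1, w.2.2)))
  · intro z x y
    rw [hpf]
    have hev : {ω | Xz (Z ω) ω = x ∧ (if Xz (Z ω) ω = 0 then 1 - Y0 ω else 1 - Y1 ω) = y}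
        = {ω | Xz (Z ω) ω = x ∧ (if Xz (Z ω) ω = 0 then Y0 ω else Y1 ω) = 1 - y} := by
      ext ω
      have key : ∀ a b : Fin 2, (1 - a = b) ↔ (a = 1 - b) := by decide
      by_cases h : Xz (Z ω) ω = 0 <;> simp [h, key]
    rw [hev]
    exact law_cond z x (1 - y)
  · exact hcompl Y1 hY1
  · exact hcompl Y0 hY0

lemma inf'_swap {K : ℕ} (s : Finset (Fin K × Fin K)) (H : s.Nonempty)
    (hs : ∀ b ∈ s, Prod.swap b ∈ s) (f : Fin K × Fin K → ℝ) :
    s.inf' H f = s.inf' H (fun b => f (Prod.swap b)) := by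
  apply le_antisymm
  · refine Finset.le_inf' _ _ (fun b hb => Finset.inf'_le _ (hs b hb))
  · refine Finset.le_inf' _ _ (fun b hb => ?_)
    have h2 := Finset.inf'_le (fun b => f (Prod.swap b)) (hs b hb)
    simp only [Prod.swap_swap] at h2; exact h2

lemma gOf_flip {K : ℕ} (hK : 2 ≤ K) (p : Fin K → Fin 2 → Fin 2 → ℝ) (i j : Fin 2) :
    gOf hK (fun z x y => p z x (1 - y)) i j = gOf hK p i (1 - j) := by
  have d1 : (1 - 0 : Fin 2) = 1 := rfl
  have d2 : (1 - 1 : Fin 2) = 0 := rfl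
  rw [gOf, gOf]
  congr 1
  · refine Finset.inf'_congr _ rfl (fun z _ => ?_)
    simp only [d1, d2]
    ring
  · refine Eq.trans ?_ (inf'_swap _ _ ?hswap (fun q => p q.1 i (1 - j) + p q.1 (1 - i) 0
      + p q.2 i (1 - j) + p q.2 (1 - i) 1)).symm
    case hswap =>
      intro b hb
      simp only [Finset.mem_filter, Finset.mem_univ, true_and, Prod.fst_swap,
        Prod.snd_swap] at hb ⊢
      exact Ne.symm hb

    refine Finset.inf'_congr _ rfl (fun q _ => ?_)
    simp only [d1, d2, Prod.fst_swap, Prod.snd_swap]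
    ring

/-- sharpness of the ACE bounds: if the observed conditional laws `p z`
arise from some model satisfying assumption (i) with instrument law `π` (positive
everywhere), then there is a model — with the same instrument law `π` and the same observed
conditional laws `p`, satisfying assumption (i) — in which
`ACE(X → Y) = P(Y(x₁)=1) − P(Y(x₀)=1) = g(0,0) + g(1,1) − 1`, and another such model in
which `ACE(X → Y) = 1 − g(1,0) − g(0,1)`. -/
theorem stmt11 (K : ℕ) (hK : 2 ≤ K)
    (π : Fin K → ℝ) (hπpos : ∀ z, 0 < π z)
    (p : Fin K → Fin 2 → Fin 2 → ℝ)
    (hmodel : Nonempty (IVModel K π p)) :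
    (∃ M : IVModel K π p,
      (M.P {ω | M.Y1 ω = 1}).toReal - (M.P {ω | M.Y0 ω = 1}).toReal =
        gOf hK p 0 0 + gOf hK p 1 1 - 1) ∧
    (∃ M : IVModel K π p,
      (M.P {ω | M.Y1 ω = 1}).toReal - (M.P {ω | M.Y0 ω = 1}).toReal =
        1 - gOf hK p 1 0 - gOf hK p 0 1) := by
  
  obtain ⟨M0⟩ := hmodel
  constructor
  · obtain ⟨hπ1, hp0, hsum, u0, v1, h3, h4, h5, h6, h7, h8, h9, h10⟩ := extract hπpos M0
    obtain ⟨M, hM⟩ := first hK π p hπpos hπ1 hp0 hsum u0 v1 h3 h4 h5 h6 h7 h8 h9 h10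
    exact ⟨M, hM⟩
  · set p' : Fin K → Fin 2 → Fin 2 → ℝ := fun z x y => p z x (1 - y) with hp'
    obtain ⟨M0', -, -⟩ := flipModel (pf := p') (fun z x y => rfl) M0
    obtain ⟨hπ1', hp0', hsum', u0', v1', h3', h4', h5', h6', h7', h8', h9', h10'⟩ :=
      extract hπpos M0'
    obtain ⟨N, hN⟩ := first hK π p' hπpos hπ1' hp0' hsum' u0' v1' h3' h4' h5' h6' h7' h8' h9' h10'
    have dy : ∀ y : Fin 2, 1 - (1 - y) = y := by decide
    have hpf : ∀ z x y, p z x y = p' z x (1 - y) := by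
      intro z x y
      rw [hp']
      simp only
      rw [dy y]
    obtain ⟨M2, hA, hB⟩ := flipModel (pf := p) hpf N
    refine ⟨M2, ?_⟩
    rw [hA, hB]
    have e1 : gOf hK p' 0 0 = gOf hK p 0 1 := by
      have h := gOf_flip hK p 0 0
      rw [show (1 - 0 : Fin 2) = 1 from rfl] at h
      exact h
    have e2 : gOf hK p' 1 1 = gOf hK p 1 0 := by
      have h := gOf_flip hK p 1 1
      rw [show (1 - 1 : Fin 2) = 0 from rfl] at h
      exact h
    rw [← e1, ← e2] at *
    linarith [hN]
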